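/- For every f ∈ C²[0,1] and n ≥ 4, ‖K_n f − f‖_∞ ≤ (1/(2n))‖f′‖_∞ + (9/(8n))‖f″‖_∞. -/

import Mathlib

open MeasureTheory Set

noncomputable def kantorovich (n : ℕ) (f : ℝ → ℝ) (x : ℝ) : ℝ :=
  ((n : ℝ) + 1) * ∑ k ∈ Finset.range (n + 1),
    (n.choose k : ℝ) * x ^ k * (1 - x) ^ (n - k) *
      ∫ t in ((k : ℝ) / ((n : ℝ) + 1))..(((k : ℝ) + 1) / ((n : ℝ) + 1)), f t

noncomputable def supNorm (f : ℝ → ℝ) : ℝ :=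
  sSup {y | ∃ x ∈ Icc (0:ℝ) 1, y = |f x|}

noncomputable def omega1 (f : ℝ → ℝ) (h : ℝ) : ℝ :=
  sSup {d | ∃ s ∈ Icc (0:ℝ) 1, ∃ t ∈ Icc (0:ℝ) 1, |s - t| ≤ h ∧ d = |f s - f t|}

noncomputable def omega2 (f : ℝ → ℝ) (h : ℝ) : ℝ :=
  sSup {d | ∃ t δ : ℝ, 0 < δ ∧ δ ≤ h ∧ t - δ ∈ Icc (0:ℝ) 1 ∧ t + δ ∈ Icc (0:ℝ) 1 ∧
    d = |f (t + δ) - 2 * f t + f (t - δ)|}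

open Finset

private lemma bern_sum0 (n : ℕ) (x : ℝ) :
    ∑ k ∈ range (n + 1), (n.choose k : ℝ) * x ^ k * (1 - x) ^ (n - k) = 1 := by
  have h := congrArg (Polynomial.eval x) (bernsteinPolynomial.sum ℝ n)
  simpa [bernsteinPolynomial, Polynomial.eval_finset_sum, mul_assoc] using h

private lemma bern_sum1 (n : ℕ) (x : ℝ) :
    ∑ k ∈ range (n + 1), (k : ℝ) * ((n.choose k : ℝ) * x ^ k * (1 - x) ^ (n - k)) = n * x := by
  have h := congrArg (Polynomial.eval x) (bernsteinPolynomial.sum_smul ℝ n)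
  simpa [bernsteinPolynomial, Polynomial.eval_finset_sum, mul_assoc] using h


private lemma bern_sum2 (n : ℕ) (hn : 1 ≤ n) (x : ℝ) :
    ∑ k ∈ range (n + 1), (k : ℝ) ^ 2 * ((n.choose k : ℝ) * x ^ k * (1 - x) ^ (n - k))
      = (n : ℝ) * x + (n : ℝ) * ((n:ℝ) - 1) * x ^ 2 := by
  have h := congrArg (Polynomial.eval x) (bernsteinPolynomial.sum_mul_smul ℝ n)
  rw [Polynomial.eval_finset_sum] at h
  simp only [nsmul_eq_mul, Polynomial.eval_mul, Polynomial.eval_pow, Polynomial.eval_X,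
    Polynomial.eval_natCast] at h
  have h2 : ∑ k ∈ range (n + 1),
      ((k:ℝ) * ((k:ℝ) - 1)) * ((n.choose k : ℝ) * x ^ k * (1 - x) ^ (n - k))
      = (n : ℝ) * ((n:ℝ) - 1) * x ^ 2 := by
    rw [show ((n:ℝ) * ((n:ℝ) - 1)) = ((n * (n-1) : ℕ) : ℝ) by
      push_cast [Nat.cast_sub hn]; ring, ← h]
    refine Finset.sum_congr rfl fun k _ => ?_
    match k with
    | 0 => simp
    | (m+1) =>
      simp only [bernsteinPolynomial, Polynomial.eval_mul, Polynomial.eval_smul,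
        Polynomial.eval_pow, Polynomial.eval_X, Polynomial.eval_sub, Polynomial.eval_one,
        smul_eq_mul, nsmul_eq_mul, Polynomial.eval_natCast]
      push_cast [Nat.add_sub_cancel]
      ring
  have h1 := congrArg (Polynomial.eval x) (bernsteinPolynomial.sum_smul ℝ n)
  have h1' : ∑ k ∈ range (n + 1), (k : ℝ) * ((n.choose k : ℝ) * x ^ k * (1 - x) ^ (n - k))
      = (n:ℝ) * x := by
    simpa [bernsteinPolynomial, Polynomial.eval_finset_sum, mul_assoc] using h1
  calc ∑ k ∈ range (n + 1), (k : ℝ) ^ 2 * ((n.choose k : ℝ) * x ^ k * (1 - x) ^ (n - k))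
      = ∑ k ∈ range (n + 1),
        (((k:ℝ) * ((k:ℝ) - 1)) * ((n.choose k : ℝ) * x ^ k * (1 - x) ^ (n - k))
          + (k : ℝ) * ((n.choose k : ℝ) * x ^ k * (1 - x) ^ (n - k))) := by
        refine Finset.sum_congr rfl fun k _ => by ring
    _ = (n : ℝ) * ((n:ℝ) - 1) * x ^ 2 + (n:ℝ) * x := by
        rw [Finset.sum_add_distrib, h2, h1']
    _ = _ := by ring

private lemma lipschitz_of_deriv (g g' : ℝ → ℝ)
    (hg : ∀ s ∈ Icc (0:ℝ) 1, HasDerivWithinAt g (g' s) (Icc (0:ℝ) 1) s)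
    (M : ℝ) (hM : ∀ s ∈ Icc (0:ℝ) 1, |g' s| ≤ M) :
    ∀ a ∈ Icc (0:ℝ) 1, ∀ b ∈ Icc (0:ℝ) 1, |g b - g a| ≤ M * |b - a| := by
  intro a ha b hb
  simpa [Real.norm_eq_abs] using
    (convex_Icc (0:ℝ) 1).norm_image_sub_le_of_norm_hasDerivWithin_le hg
      (by simpa [Real.norm_eq_abs] using hM) ha hb

private lemma taylor_bound (f f' : ℝ → ℝ)
    (hd : ∀ s ∈ Icc (0:ℝ) 1, HasDerivWithinAt f (f' s) (Icc (0:ℝ) 1) s)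
    (M : ℝ) (hM0 : 0 ≤ M)
    (hM : ∀ a ∈ Icc (0:ℝ) 1, ∀ b ∈ Icc (0:ℝ) 1, |f' b - f' a| ≤ M * |b - a|)
    (x : ℝ) (hx : x ∈ Icc (0:ℝ) 1) (t : ℝ) (ht : t ∈ Icc (0:ℝ) 1) :
    |f t - f x - f' x * (t - x)| ≤ M * (t - x)^2 := by
  have hsub : uIcc x t ⊆ Icc (0:ℝ) 1 := uIcc_subset_Icc hx ht
  have hg : ∀ s ∈ uIcc x t,
      HasDerivWithinAt (fun s => f s - f' x * s) (f' s - f' x) (uIcc x t) s := by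
    intro s hs
    have h1 := (hd s (hsub hs)).mono hsub
    have h2 : HasDerivWithinAt (fun s : ℝ => f' x * s) (f' x) (uIcc x t) s := by
      simpa using (hasDerivWithinAt_id s (uIcc x t)).const_mul (f' x)
    exact h1.sub h2
  have hb : ∀ s ∈ uIcc x t, ‖f' s - f' x‖ ≤ M * |t - x| := by
    intro s hs
    have h1 : |f' s - f' x| ≤ M * |s - x| := hM x hx s (hsub hs)
    have h2 : |s - x| ≤ |t - x| := by
      rcases Set.mem_uIcc.mp hs with ⟨h3, h4⟩ | ⟨h3, h4⟩
      · rw [abs_of_nonneg (by linarith), abs_of_nonneg (by linarith)]; linarith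
      · rw [abs_of_nonpos (by linarith), abs_of_nonpos (by linarith)]; linarith
    calc |f' s - f' x| ≤ M * |s - x| := h1
      _ ≤ M * |t - x| := by exact mul_le_mul_of_nonneg_left h2 hM0
  have := convex_uIcc x t |>.norm_image_sub_le_of_norm_hasDerivWithin_le hg hb
    left_mem_uIcc right_mem_uIcc
  rw [Real.norm_eq_abs, Real.norm_eq_abs] at this
  calc |f t - f x - f' x * (t - x)|
      = |(f t - f' x * t) - (f x - f' x * x)| := by congr 1; ring
    _ ≤ M * |t - x| * |t - x| := this
    _ = M * (t - x)^2 := by rw [mul_assoc, abs_mul_abs_self]; ring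

private lemma supNorm_eq (g : ℝ → ℝ) : supNorm g = sSup ((fun x => |g x|) '' Icc (0:ℝ) 1) := by
  unfold supNorm
  congr 1
  ext y
  simp [Set.mem_image, eq_comm]

private lemma supNorm_nonneg (g : ℝ → ℝ) : 0 ≤ supNorm g := by
  apply Real.sSup_nonneg
  rintro y ⟨x, _, rfl⟩
  exact abs_nonneg _

private lemma le_supNorm (g : ℝ → ℝ) (hg : ContinuousOn g (Icc (0:ℝ) 1))
    (x : ℝ) (hx : x ∈ Icc (0:ℝ) 1) : |g x| ≤ supNorm g := by
  rw [supNorm_eq]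
  exact le_csSup (isCompact_Icc.bddAbove_image hg.abs) ⟨x, hx, rfl⟩

private lemma integral_sq (a b x : ℝ) :
    ∫ t in a..b, (t - x)^2 = ((b-x)^3 - (a-x)^3)/3 := by
  have h := intervalIntegral.integral_comp_sub_right (a := a) (b := b) (fun t => t^2) x
  rw [h, integral_pow]
  norm_num

private lemma integral_linear (a b x fx f'x : ℝ) :
    ∫ t in a..b, (fx + f'x * (t - x)) = fx * (b - a) + f'x * ((b^2 - a^2)/2 - (b-a)*x) := by
  have h1 : IntervalIntegrable (fun _ : ℝ => fx) volume a b := intervalIntegrable_const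
  have h2 : IntervalIntegrable (fun t : ℝ => f'x * (t - x)) volume a b := by
    apply Continuous.intervalIntegrable; continuity
  rw [intervalIntegral.integral_add h1 h2, intervalIntegral.integral_const,
    intervalIntegral.integral_const_mul]
  have h3 : ∫ t in a..b, (t - x) = (b^2 - a^2)/2 - (b-a)*x := by
    have ha : IntervalIntegrable (fun t : ℝ => t) volume a b := by
      apply Continuous.intervalIntegrable; continuity
    rw [intervalIntegral.integral_sub ha intervalIntegrable_const,
      integral_id, intervalIntegral.integral_const, smul_eq_mul]
  rw [h3, smul_eq_mul]; ring

private lemma integral_taylor (f : ℝ → ℝ) (hc : ContinuousOn f (Icc (0:ℝ) 1))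
    (fx f'x : ℝ) (a b x : ℝ) (hab : a ≤ b) (ha : (0:ℝ) ≤ a) (hb : b ≤ 1) :
    ∫ t in a..b, f t = fx * (b - a) + f'x * ((b^2 - a^2)/2 - (b-a)*x)
      + ∫ t in a..b, (f t - fx - f'x * (t - x)) := by
  have hs : Icc a b ⊆ Icc (0:ℝ) 1 := Icc_subset_Icc ha hb
  have hif : IntervalIntegrable f volume a b := by
    apply ContinuousOn.intervalIntegrable
    rw [uIcc_of_le hab]; exact hc.mono hs
  have h2 : IntervalIntegrable (fun t : ℝ => fx + f'x * (t - x)) volume a b := by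
    apply Continuous.intervalIntegrable; continuity
  have : ∫ t in a..b, (f t - fx - f'x * (t - x))
      = (∫ t in a..b, f t) - ∫ t in a..b, (fx + f'x * (t - x)) := by
    rw [← intervalIntegral.integral_sub hif h2]
    congr 1; ext t; ring
  rw [this, integral_linear]; ring

set_option maxHeartbeats 2000000 in
theorem kantorovich_error_C2 (f : ℝ → ℝ) (hf : ContDiffOn ℝ 2 f (Icc (0:ℝ) 1))
    (n : ℕ) (hn : 4 ≤ n) :
    supNorm (fun x => kantorovich n f x - f x)
      ≤ 1 / (2 * (n : ℝ)) * supNorm (derivWithin f (Icc (0:ℝ) 1))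
        + 9 / (8 * (n : ℝ)) * supNorm (derivWithin (derivWithin f (Icc (0:ℝ) 1)) (Icc (0:ℝ) 1)) := by
  set N : ℝ := (n : ℝ) with hN
  have hN4 : (4:ℝ) ≤ N := by rw [hN]; exact_mod_cast hn
  have hNpos : (0:ℝ) < N := by linarith
  have hN1 : (0:ℝ) < N + 1 := by linarith
  have hud : UniqueDiffOn ℝ (Icc (0:ℝ) 1) := uniqueDiffOn_Icc one_pos
  set f₁ := derivWithin f (Icc (0:ℝ) 1) with hf₁
  set f₂ := derivWithin f₁ (Icc (0:ℝ) 1) with hf₂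
  have hcf : ContinuousOn f (Icc (0:ℝ) 1) := hf.continuousOn
  have hf1 : ContDiffOn ℝ 1 f₁ (Icc (0:ℝ) 1) := hf.derivWithin hud (by norm_num)
  have hc1 : ContinuousOn f₁ (Icc (0:ℝ) 1) := hf1.continuousOn
  have hc2 : ContinuousOn f₂ (Icc (0:ℝ) 1) := hf1.continuousOn_derivWithin hud (le_refl 1)
  have hd1 : ∀ s ∈ Icc (0:ℝ) 1, HasDerivWithinAt f (f₁ s) (Icc (0:ℝ) 1) s := fun s hs =>
    ((hf.differentiableOn (by norm_num)) s hs).hasDerivWithinAt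
  have hd2 : ∀ s ∈ Icc (0:ℝ) 1, HasDerivWithinAt f₁ (f₂ s) (Icc (0:ℝ) 1) s := fun s hs =>
    ((hf1.differentiableOn (by norm_num)) s hs).hasDerivWithinAt
  set M₁ := supNorm f₁ with hM1def
  set M₂ := supNorm f₂ with hM2def
  have hM₁ : 0 ≤ M₁ := supNorm_nonneg _
  have hM₂ : 0 ≤ M₂ := supNorm_nonneg _
  have hM1b : ∀ s ∈ Icc (0:ℝ) 1, |f₁ s| ≤ M₁ := fun s hs => le_supNorm _ hc1 s hs
  have hM2b : ∀ s ∈ Icc (0:ℝ) 1, |f₂ s| ≤ M₂ := fun s hs => le_supNorm _ hc2 s hs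
  have hlip : ∀ a ∈ Icc (0:ℝ) 1, ∀ b ∈ Icc (0:ℝ) 1, |f₁ b - f₁ a| ≤ M₂ * |b - a| :=
    lipschitz_of_deriv f₁ f₂ hd2 M₂ hM2b
  have htay := taylor_bound f f₁ hd1 M₂ hM₂ hlip
  have main : ∀ x ∈ Icc (0:ℝ) 1, |kantorovich n f x - f x|
      ≤ 1 / (2 * N) * M₁ + 9 / (8 * N) * M₂ := by
    intro x hx
    obtain ⟨hx0, hx1⟩ := hx
    set q : ℕ → ℝ := fun k => (n.choose k : ℝ) * x ^ k * (1 - x) ^ (n - k) with hq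
    have hq0 : ∀ k ∈ range (n+1), 0 ≤ q k := fun k _ => by
      have h1x : (0:ℝ) ≤ 1 - x := by linarith
      positivity
    set R : ℕ → ℝ := fun k =>
      ∫ t in ((k:ℝ)/(N+1))..(((k:ℝ)+1)/(N+1)), (f t - f x - f₁ x * (t - x)) with hR
    set I2 : ℕ → ℝ := fun k =>
      ((((k:ℝ)+1)/(N+1) - x)^3 - ((k:ℝ)/(N+1) - x)^3)/3 with hI2
    have hk_mem : ∀ k ∈ range (n+1), (k:ℝ)/(N+1) ≤ ((k:ℝ)+1)/(N+1) ∧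
        0 ≤ (k:ℝ)/(N+1) ∧ ((k:ℝ)+1)/(N+1) ≤ 1 := by
      intro k hk
      have hkn : (k:ℝ) ≤ N := by
        have := Nat.lt_succ_iff.mp (Finset.mem_range.mp hk)
        rw [hN]; exact_mod_cast this
      refine ⟨by gcongr; linarith, by positivity, ?_⟩
      rw [div_le_one hN1]; linarith
    have hS0 : ∑ k ∈ range (n+1), q k = 1 := bern_sum0 n x
    have hS1 : ∑ k ∈ range (n+1), (k:ℝ) * q k = N * x := bern_sum1 n x
    have hS2 : ∑ k ∈ range (n+1), (k:ℝ)^2 * q k = N * x + N * (N-1) * x^2 :=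
      bern_sum2 n (by omega) x
    have key : ∀ k ∈ range (n+1),
        (∫ t in ((k:ℝ)/(N+1))..(((k:ℝ)+1)/(N+1)), f t)
        = f x * (1/(N+1)) + f₁ x * ((k:ℝ)/(N+1)^2 + 1/(2*(N+1)^2) - x/(N+1)) + R k := by
      intro k hk
      obtain ⟨hab, ha, hb⟩ := hk_mem k hk
      rw [integral_taylor f hcf (f x) (f₁ x) _ _ x hab ha hb]
      have hne : (N+1) ≠ 0 := ne_of_gt hN1
      congr 1
      field_simp
      ring
    have expand : kantorovich n f x = (N+1) * ∑ k ∈ range (n+1),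
        q k * (f x * (1/(N+1)) + f₁ x * ((k:ℝ)/(N+1)^2 + 1/(2*(N+1)^2) - x/(N+1)) + R k) := by
      unfold kantorovich
      rw [← hN]
      congr 1
      refine Finset.sum_congr rfl fun k hk => ?_
      rw [key k hk]
    have e1 : ∑ k ∈ range (n+1),
        q k * (f x * (1/(N+1)) + f₁ x * ((k:ℝ)/(N+1)^2 + 1/(2*(N+1)^2) - x/(N+1)) + R k)
        = f x * (1/(N+1)) + f₁ x * ((N*x)/(N+1)^2 + 1/(2*(N+1)^2) - x/(N+1))
          + ∑ k ∈ range (n+1), q k * R k := by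
      have hc : ∀ k ∈ range (n+1),
          q k * (f x * (1/(N+1)) + f₁ x * ((k:ℝ)/(N+1)^2 + 1/(2*(N+1)^2) - x/(N+1)) + R k)
          = (f x * (1/(N+1))) * q k + (f₁ x/(N+1)^2) * ((k:ℝ) * q k)
            + (f₁ x * (1/(2*(N+1)^2) - x/(N+1))) * q k + q k * R k := fun k _ => by ring
      rw [Finset.sum_congr rfl hc]
      simp only [Finset.sum_add_distrib, ← Finset.mul_sum]
      rw [hS0, hS1]
      ring
    have hker : kantorovich n f x - f x
        = f₁ x * ((1/2 - x)/(N+1)) + (N+1) * ∑ k ∈ range (n+1), q k * R k := by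
      rw [expand, e1]
      field_simp
      ring
    have hRb : ∀ k ∈ range (n+1), |R k| ≤ M₂ * I2 k := by
      intro k hk
      obtain ⟨hab, ha, hb⟩ := hk_mem k hk
      have hsub : Icc ((k:ℝ)/(N+1)) (((k:ℝ)+1)/(N+1)) ⊆ Icc (0:ℝ) 1 := Icc_subset_Icc ha hb
      have hrcont : ContinuousOn (fun t => f t - f x - f₁ x * (t - x)) (Icc (0:ℝ) 1) :=
        (hcf.sub continuousOn_const).sub
          (continuousOn_const.mul (continuousOn_id.sub continuousOn_const))
      have hrint : IntervalIntegrable (fun t => f t - f x - f₁ x * (t - x)) volume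
          ((k:ℝ)/(N+1)) (((k:ℝ)+1)/(N+1)) := by
        apply ContinuousOn.intervalIntegrable
        rw [uIcc_of_le hab]; exact hrcont.mono hsub
      have h1 : |R k| ≤ ∫ t in ((k:ℝ)/(N+1))..(((k:ℝ)+1)/(N+1)),
          |f t - f x - f₁ x * (t - x)| := by
        rw [hR]
        exact intervalIntegral.abs_integral_le_integral_abs hab
      have h2 : (∫ t in ((k:ℝ)/(N+1))..(((k:ℝ)+1)/(N+1)), |f t - f x - f₁ x * (t - x)|)
          ≤ ∫ t in ((k:ℝ)/(N+1))..(((k:ℝ)+1)/(N+1)), M₂ * (t - x)^2 := by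
        apply intervalIntegral.integral_mono_on hab hrint.abs
        · exact (continuous_const.mul ((continuous_id.sub continuous_const).pow 2)).intervalIntegrable _ _
        · intro t ht
          exact htay x ⟨hx0, hx1⟩ t (hsub ht)
      rw [intervalIntegral.integral_const_mul, integral_sq] at h2
      calc |R k| ≤ _ := h1
        _ ≤ M₂ * (((((k:ℝ)+1)/(N+1) - x)^3 - ((k:ℝ)/(N+1) - x)^3)/3) := by
            exact h2
        _ = M₂ * I2 k := rfl
    have hsum2 : (N+1) * ∑ k ∈ range (n+1), q k * I2 k
        = ((N-1)*x*(1-x) + 1/3)/(N+1)^2 := by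
      have hne : (N+1) ≠ 0 := ne_of_gt hN1
      have hc : ∀ k ∈ range (n+1), q k * I2 k
          = (1/(N+1)^3) * ((k:ℝ)^2 * q k) + (1/(N+1)^3 - 2*x/(N+1)^2) * ((k:ℝ) * q k)
            + (x^2/(N+1) - x/(N+1)^2 + 1/(3*(N+1)^3)) * q k := by
        intro k _
        rw [hI2]
        field_simp
        ring
      rw [Finset.sum_congr rfl hc]
      simp only [Finset.sum_add_distrib, ← Finset.mul_sum]
      rw [hS0, hS1, hS2]
      field_simp
      ring
    have habs1 : |(1/2 - x)/(N+1)| ≤ 1/(2*N) := by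
      rw [abs_div, abs_of_pos hN1]
      have h12 : |1/2 - x| ≤ 1/2 := by rw [abs_le]; constructor <;> linarith
      calc |1/2 - x|/(N+1) ≤ (1/2)/(N+1) := by gcongr
        _ ≤ 1/(2*N) := by rw [div_le_div_iff₀ hN1 (by positivity)]; linarith
    have hsumR : |∑ k ∈ range (n+1), q k * R k| ≤ M₂ * ∑ k ∈ range (n+1), q k * I2 k := by
      calc |∑ k ∈ range (n+1), q k * R k| ≤ ∑ k ∈ range (n+1), |q k * R k| :=
            Finset.abs_sum_le_sum_abs _ _
        _ ≤ ∑ k ∈ range (n+1), q k * (M₂ * I2 k) := by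
            apply Finset.sum_le_sum
            intro k hk
            rw [abs_mul, abs_of_nonneg (hq0 k hk)]
            exact mul_le_mul_of_nonneg_left (hRb k hk) (hq0 k hk)
        _ = M₂ * ∑ k ∈ range (n+1), q k * I2 k := by
            rw [Finset.mul_sum]
            exact Finset.sum_congr rfl fun k _ => by ring
    have hfin2 : M₂ * (((N-1)*x*(1-x) + 1/3)/(N+1)^2) ≤ 9/(8*N) * M₂ := by
      have hx4 : (0:ℝ) ≤ 1/4 - x*(1-x) := by nlinarith [sq_nonneg (2*x-1)]
      have hkey : ((N-1)*x*(1-x) + 1/3)/(N+1)^2 ≤ 9/(8*N) := by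
        rw [div_le_div_iff₀ (by positivity) (by positivity)]
        nlinarith [mul_nonneg (mul_nonneg (show (0:ℝ) ≤ N-1 by linarith)
          (show (0:ℝ) ≤ 8*N by linarith)) hx4]
      calc M₂ * (((N-1)*x*(1-x) + 1/3)/(N+1)^2) ≤ M₂ * (9/(8*N)) :=
            mul_le_mul_of_nonneg_left hkey hM₂
        _ = 9/(8*N) * M₂ := by ring
    calc |kantorovich n f x - f x|
        = |f₁ x * ((1/2 - x)/(N+1)) + (N+1) * ∑ k ∈ range (n+1), q k * R k| := by rw [hker]
      _ ≤ |f₁ x * ((1/2 - x)/(N+1))| + |(N+1) * ∑ k ∈ range (n+1), q k * R k| := abs_add_le _ _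
      _ = |f₁ x| * |(1/2 - x)/(N+1)| + (N+1) * |∑ k ∈ range (n+1), q k * R k| := by
          rw [abs_mul, abs_mul, abs_of_pos hN1]
      _ ≤ M₁ * (1/(2*N)) + (N+1) * (M₂ * ∑ k ∈ range (n+1), q k * I2 k) := by
          apply add_le_add
          · exact mul_le_mul (hM1b x ⟨hx0, hx1⟩) habs1 (abs_nonneg _) hM₁
          · exact mul_le_mul_of_nonneg_left hsumR (le_of_lt hN1)
      _ = 1/(2*N) * M₁ + M₂ * ((N+1) * ∑ k ∈ range (n+1), q k * I2 k) := by ring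
      _ = 1/(2*N) * M₁ + M₂ * (((N-1)*x*(1-x) + 1/3)/(N+1)^2) := by rw [hsum2]
      _ ≤ 1/(2*N) * M₁ + 9/(8*N) * M₂ := add_le_add_right hfin2 _
  apply Real.sSup_le
  · rintro y ⟨x, hx, rfl⟩
    simpa using main x hx
  · have h1 : (0:ℝ) ≤ 1/(2*N) := by positivity
    have h2 : (0:ℝ) ≤ 9/(8*N) := by positivity
    exact add_nonneg (mul_nonneg h1 hM₁) (mul_nonneg h2 hM₂)
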